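/- Let 0 < k < n be integers, let κ_1 < κ_2 < ⋯ < κ_n be real numbers, and let A be a real k×n matrix of rank k that is totally nonnegative. Then the multiline-soliton function u(x,y,t) = 2 ∂_x² log τ(x,y,t) is bounded on ℝ³: there is a constant C such that |u(x,y,t)| ≤ C for all real (x,y,t). -/

import Mathlib

open scoped BigOperators

/-- The maximal minor `Δ_I(A)` of a real `k × n` matrix `A` on the column set `I`
(columns taken in increasing order); junk value `0` if `I` does not have `k` elements. -/
noncomputable def kpMinor (k n : ℕ) (A : Matrix (Fin k) (Fin n) ℝ) (I : Finset (Fin n)) : ℝ :=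
  if h : I.card = k then (A.submatrix id fun a => I.orderEmbOfFin h a).det else 0

/-- `A` is totally nonnegative: all maximal minors are nonnegative. -/
def TotallyNonneg (k n : ℕ) (A : Matrix (Fin k) (Fin n) ℝ) : Prop :=
  ∀ I : Finset (Fin n), I.card = k → 0 ≤ kpMinor k n A I

/-- The Vandermonde factor `∏_{a<b} (κ_{i_b} - κ_{i_a})` attached to a `k`-element
column set `I = {i_1 < ⋯ < i_k}`. -/
noncomputable def kpVdm (k n : ℕ) (κ : Fin n → ℝ) (I : Finset (Fin n)) : ℝ :=
  if h : I.card = k then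
    ∏ p ∈ Finset.univ.filter fun p : Fin k × Fin k => p.1 < p.2,
      (κ (I.orderEmbOfFin h p.2) - κ (I.orderEmbOfFin h p.1))
  else 0

/-- The KP-II tau function of the data `(κ, A)`:
`τ(x,y,t) = Σ_I Δ_I(A) ∏_{a<b}(κ_{i_b}-κ_{i_a}) exp(Σ_{i∈I} (κ_i x + κ_i² y + κ_i³ t))`. -/
noncomputable def kpTau (k n : ℕ) (κ : Fin n → ℝ) (A : Matrix (Fin k) (Fin n) ℝ)
    (x y t : ℝ) : ℝ :=
  ∑ I ∈ Finset.powersetCard k (Finset.univ : Finset (Fin n)),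
    kpMinor k n A I * kpVdm k n κ I *
      Real.exp (∑ i ∈ I, (κ i * x + κ i ^ 2 * y + κ i ^ 3 * t))

/-- The multiline-soliton function `u(x,y,t) = 2 ∂_x² log τ(x,y,t)` of the data `(κ, A)`. -/
noncomputable def kpU (k n : ℕ) (κ : Fin n → ℝ) (A : Matrix (Fin k) (Fin n) ℝ)
    (x y t : ℝ) : ℝ :=
  2 * iteratedDeriv 2 (fun x' => Real.log (kpTau k n κ A x' y t)) x

open Matrix in
lemma exists_minor_ne_zero (k n : ℕ) (A : Matrix (Fin k) (Fin n) ℝ) (hrank : A.rank = k) :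
    ∃ I : Finset (Fin n), I.card = k ∧ kpMinor k n A I ≠ 0 := by
  classical
  have hspan : Submodule.span ℝ (Set.range Aᵀ) = ⊤ := by
    apply Submodule.eq_top_of_finrank_eq
    have h := Matrix.rank_eq_finrank_span_cols A
    rw [hrank] at h
    exact h.symm.trans (by simp [Module.finrank_pi])
  obtain ⟨b, hbsub, hbspan, hbind⟩ := exists_linearIndependent ℝ (Set.range Aᵀ)
  rw [hspan] at hbspan
  have hfin : b.Finite := Set.Finite.subset (Set.finite_range Aᵀ) hbsub
  haveI : Fintype b := hfin.fintype
  have B : Module.Basis b ℝ (Fin k → ℝ) := Module.Basis.mk hbind (by rw [Subtype.range_coe, hbspan])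
  have hcardb : Fintype.card b = k := by
    have := Module.finrank_eq_card_basis B
    simpa [Module.finrank_pi] using this.symm
  -- choice of column indices
  have hex : ∀ v : b, ∃ i : Fin n, Aᵀ i = (v : Fin k → ℝ) := fun v => hbsub v.2
  choose f hf using hex
  have hfinj : Function.Injective f := by
    intro v w hvw
    have : (v : Fin k → ℝ) = w := by rw [← hf v, ← hf w, hvw]
    exact Subtype.ext this
  set I : Finset (Fin n) := Finset.univ.image f with hI
  have hcard : I.card = k := by
    rw [hI, Finset.card_image_of_injective _ hfinj, Finset.card_univ, hcardb]
  refine ⟨I, hcard, ?_⟩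
  rw [kpMinor, dif_pos hcard]
  set e := I.orderEmbOfFin hcard with he
  set M := A.submatrix id fun a => e a with hM
  -- columns of M are injective into b
  have hmem : ∀ a : Fin k, ∃ v : b, f v = e a := by
    intro a
    have : e a ∈ I := I.orderEmbOfFin_mem hcard a
    rw [hI] at this
    simpa using Finset.mem_image.mp this
  choose g hg using hmem
  have hginj : Function.Injective g := by
    intro a a' h
    have : e a = e a' := by rw [← hg a, ← hg a', h]
    exact e.injective this
  have hcols : LinearIndependent ℝ (fun a : Fin k => Mᵀ a) := by
    have hMT : (fun a : Fin k => Mᵀ a) = (fun v : b => (v : Fin k → ℝ)) ∘ g := by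
      funext a
      have : Mᵀ a = Aᵀ (e a) := rfl
      rw [this, ← hg a, hf (g a)]
      rfl
    rw [hMT]
    exact hbind.comp g hginj
  have : IsUnit M := Matrix.linearIndependent_cols_iff_isUnit.mp hcols
  have := (Matrix.isUnit_iff_isUnit_det M).mp this
  exact (isUnit_iff_ne_zero.mp this)

lemma kpVdm_pos (k n : ℕ) (κ : Fin n → ℝ) (hκ : StrictMono κ) (I : Finset (Fin n))
    (h : I.card = k) : 0 < kpVdm k n κ I := by
  rw [kpVdm, dif_pos h]
  apply Finset.prod_pos
  intro p hp
  have hlt : p.1 < p.2 := (Finset.mem_filter.mp hp).2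
  have : κ (I.orderEmbOfFin h p.1) < κ (I.orderEmbOfFin h p.2) :=
    hκ ((I.orderEmbOfFin h).strictMono hlt)
  linarith

lemma logsum_second_deriv_bound {ι : Type*} (s : Finset ι) (c θ γ : ι → ℝ)
    (hc : ∀ i ∈ s, 0 ≤ c i) (i₀ : ι) (hi₀ : i₀ ∈ s) (hc₀ : 0 < c i₀)
    (M : ℝ) (hθ : ∀ i ∈ s, |θ i| ≤ M) (x : ℝ) :
    |iteratedDeriv 2 (fun u => Real.log (∑ i ∈ s, c i * Real.exp (θ i * u + γ i))) x|
      ≤ 2 * M ^ 2 := by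
  classical
  have hM0 : 0 ≤ M := le_trans (abs_nonneg _) (hθ i₀ hi₀)
  set G : ℕ → ℝ → ℝ := fun m u => ∑ i ∈ s, c i * θ i ^ m * Real.exp (θ i * u + γ i) with hGdef
  have hG0eq : (fun u => Real.log (∑ i ∈ s, c i * Real.exp (θ i * u + γ i)))
      = fun u => Real.log (G 0 u) := by
    funext u
    congr 1
    apply Finset.sum_congr rfl
    intro i _
    ring
  have hGpos : ∀ u, 0 < G 0 u := by
    intro u
    apply Finset.sum_pos'
    · intro i hi
      have := hc i hi
      positivity
    · refine ⟨i₀, hi₀, ?_⟩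
      have := Real.exp_pos (θ i₀ * u + γ i₀)
      positivity
  have hG : ∀ (m : ℕ) (u : ℝ), HasDerivAt (G m) (G (m + 1) u) u := by
    intro m u
    apply HasDerivAt.fun_sum
    intro i _
    have h1 : HasDerivAt (fun v : ℝ => θ i * v + γ i) (θ i) u := by
      simpa using ((hasDerivAt_id u).const_mul (θ i)).add_const (γ i)
    have h3 := (h1.exp).const_mul (c i * θ i ^ m)
    convert h3 using 1
    · rfl
    ring
  have hlog : ∀ u, HasDerivAt (fun v => Real.log (G 0 v)) (G 1 u / G 0 u) u := by
    intro u
    exact (hG 0 u).log (hGpos u).ne'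
  have hderivf : deriv (fun v => Real.log (G 0 v)) = fun v => G 1 v / G 0 v := by
    funext u; exact (hlog u).deriv
  have h2 : HasDerivAt (fun v => G 1 v / G 0 v)
      ((G 2 x * G 0 x - G 1 x * G 1 x) / (G 0 x) ^ 2) x :=
    (hG 1 x).div (hG 0 x) (hGpos x).ne'
  have hiter : iteratedDeriv 2 (fun v => Real.log (G 0 v)) x
      = (G 2 x * G 0 x - G 1 x * G 1 x) / (G 0 x) ^ 2 := by
    rw [iteratedDeriv_succ, iteratedDeriv_one, hderivf]
    exact h2.deriv
  rw [hG0eq, hiter]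
  -- bounds
  have hG1 : |G 1 x| ≤ M * G 0 x := by
    calc |G 1 x| ≤ ∑ i ∈ s, |c i * θ i ^ 1 * Real.exp (θ i * x + γ i)| :=
          Finset.abs_sum_le_sum_abs _ _
      _ ≤ ∑ i ∈ s, M * (c i * θ i ^ 0 * Real.exp (θ i * x + γ i)) := by
          apply Finset.sum_le_sum
          intro i hi
          rw [abs_mul, abs_mul, abs_of_nonneg (hc i hi),
            abs_of_pos (Real.exp_pos _), pow_one, pow_zero, mul_one]
          have h1 := hθ i hi
          have h2 := hc i hi
          have h3 := (Real.exp_pos (θ i * x + γ i)).le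
          nlinarith [mul_nonneg (mul_nonneg h2 h3) (sub_nonneg.mpr h1)]
      _ = M * G 0 x := by rw [← Finset.mul_sum]
  have hG2 : |G 2 x| ≤ M ^ 2 * G 0 x := by
    calc |G 2 x| ≤ ∑ i ∈ s, |c i * θ i ^ 2 * Real.exp (θ i * x + γ i)| :=
          Finset.abs_sum_le_sum_abs _ _
      _ ≤ ∑ i ∈ s, M ^ 2 * (c i * θ i ^ 0 * Real.exp (θ i * x + γ i)) := by
          apply Finset.sum_le_sum
          intro i hi
          rw [abs_mul, abs_mul, abs_of_nonneg (hc i hi),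
            abs_of_pos (Real.exp_pos _), pow_zero, mul_one]
          have h1 := hθ i hi
          have h1' : |θ i| ^ 2 ≤ M ^ 2 := by nlinarith [abs_nonneg (θ i)]
          have h2 := hc i hi
          have h3 := (Real.exp_pos (θ i * x + γ i)).le
          have h4 : |θ i ^ 2| = |θ i| ^ 2 := by rw [abs_pow]
          rw [h4]
          nlinarith [mul_nonneg (mul_nonneg h2 h3) (sub_nonneg.mpr h1')]
      _ = M ^ 2 * G 0 x := by rw [← Finset.mul_sum]
  have hG0 := hGpos x
  have hnum : |G 2 x * G 0 x - G 1 x * G 1 x| ≤ 2 * M ^ 2 * (G 0 x) ^ 2 := by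
    calc |G 2 x * G 0 x - G 1 x * G 1 x| ≤ |G 2 x * G 0 x| + |G 1 x * G 1 x| := abs_sub _ _
      _ = |G 2 x| * G 0 x + |G 1 x| * |G 1 x| := by
          rw [abs_mul, abs_mul, abs_of_pos hG0]
      _ ≤ (M ^ 2 * G 0 x) * G 0 x + (M * G 0 x) * (M * G 0 x) := by
          have := abs_nonneg (G 1 x)
          nlinarith
      _ = 2 * M ^ 2 * (G 0 x) ^ 2 := by ring
  rw [abs_div, abs_of_pos (by positivity : (0:ℝ) < (G 0 x) ^ 2)]
  rw [div_le_iff₀ (by positivity)]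
  nlinarith

/-- for `0 < k < n`, strictly increasing phases, and a totally nonnegative
`k × n` matrix of rank `k`, the multiline-soliton function `u = 2 ∂_x² log τ` is bounded
on `ℝ³`. -/

theorem kpU_bounded (k n : ℕ) (hk : 0 < k) (hkn : k < n)
    (κ : Fin n → ℝ) (hκ : StrictMono κ)
    (A : Matrix (Fin k) (Fin n) ℝ) (hrank : A.rank = k) (hA : TotallyNonneg k n A) :
    ∃ C : ℝ, ∀ x y t : ℝ, |kpU k n κ A x y t| ≤ C := by
  classical
  obtain ⟨I₀, hI₀card, hI₀⟩ := exists_minor_ne_zero k n A hrank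
  set s := Finset.powersetCard k (Finset.univ : Finset (Fin n)) with hs
  set c : Finset (Fin n) → ℝ := fun I => kpMinor k n A I * kpVdm k n κ I with hc
  set θf : Finset (Fin n) → ℝ := fun I => ∑ i ∈ I, κ i with hθf
  have hcnonneg : ∀ I ∈ s, 0 ≤ c I := by
    intro I hI
    have hIc : I.card = k := Finset.mem_powersetCard_univ.mp hI
    exact mul_nonneg (hA I hIc) (kpVdm_pos k n κ hκ I hIc).le
  have hI₀s : I₀ ∈ s := Finset.mem_powersetCard_univ.mpr hI₀card
  have hc₀ : 0 < c I₀ :=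
    mul_pos (lt_of_le_of_ne (hA I₀ hI₀card) (Ne.symm hI₀)) (kpVdm_pos k n κ hκ I₀ hI₀card)
  set M : ℝ := ∑ i, |κ i| with hM
  have hθle : ∀ I ∈ s, |θf I| ≤ M := by
    intro I _
    calc |θf I| ≤ ∑ i ∈ I, |κ i| := Finset.abs_sum_le_sum_abs _ _
      _ ≤ M := Finset.sum_le_sum_of_subset_of_nonneg (Finset.subset_univ I)
          (fun i _ _ => abs_nonneg _)
  refine ⟨2 * (2 * M ^ 2), fun x y t => ?_⟩
  set γf : Finset (Fin n) → ℝ := fun I => ∑ i ∈ I, (κ i ^ 2 * y + κ i ^ 3 * t) with hγf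
  have htau : ∀ x' : ℝ, kpTau k n κ A x' y t
      = ∑ I ∈ s, c I * Real.exp (θf I * x' + γf I) := by
    intro x'
    rw [kpTau]
    apply Finset.sum_congr rfl
    intro I _
    have hexp : ∑ i ∈ I, (κ i * x' + κ i ^ 2 * y + κ i ^ 3 * t) = θf I * x' + γf I := by
      rw [hθf, hγf, Finset.sum_mul, ← Finset.sum_add_distrib]
      apply Finset.sum_congr rfl
      intro i _
      ring
    rw [hexp, hc]
  have hfun : (fun x' => Real.log (kpTau k n κ A x' y t))
      = fun x' => Real.log (∑ I ∈ s, c I * Real.exp (θf I * x' + γf I)) := by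
    funext x'
    rw [htau x']
  rw [kpU, hfun, abs_mul, abs_two]
  have hb := logsum_second_deriv_bound s c θf γf hcnonneg I₀ hI₀s hc₀ M hθle x
  nlinarith [abs_nonneg (iteratedDeriv 2
    (fun x' => Real.log (∑ I ∈ s, c I * Real.exp (θf I * x' + γf I))) x)]
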